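/- The midpoint J = (P+Q)/2 of segment PQ is collinear with T_P(G) and T_P(V), and the midpoint J' = (P'+Q')/2 of segment P'Q' is collinear with T_{P'}(G) and T_{P'}(V). (Thus T_P(GV) is the line G₁J through the centroid G₁ of the cevian triangle of P and the midpoint of PQ, and T_{P'}(GV) is the line G₂J'; together with the line GV these three lines are concurrent at the center Z of 𝒞_P.) -/

import Mathlib

noncomputable section
abbrev Pt := EuclideanSpace ℝ (Fin 2)

lemma aff_comb (f : Pt →ᵃ[ℝ] Pt) (u v w : ℝ) (h : u + v + w = 1) (A B C : Pt) :
    f (u • A + v • B + w • C) = u • f A + v • f B + w • f C := by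
  have hw : w = 1 - u - v := by linarith
  subst hw
  have hx : u • A + v • B + (1 - u - v) • C = (u • (A - C) + v • (B - C)) +ᵥ C := by
    simp only [vadd_eq_add]; module
  rw [hx, f.map_vadd]
  have h1 : f.linear (A - C) = f A - f C := by
    simpa [vsub_eq_sub] using f.linearMap_vsub A C
  have h2 : f.linear (B - C) = f B - f C := by
    simpa [vsub_eq_sub] using f.linearMap_vsub B C
  rw [map_add, map_smul, map_smul, h1, h2]
  simp only [vadd_eq_add]; module

set_option maxHeartbeats 4000000 in
theorem stmt18
    (A B C : Pt) (hABC : AffineIndependent ℝ ![A, B, C])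
    (α β γ : ℝ) (hsum : α + β + γ = 1)
    (hα : α ≠ 0) (hβ : β ≠ 0) (hγ : γ ≠ 0)
    (hβγ : β + γ ≠ 0) (hγα : γ + α ≠ 0) (hαβ : α + β ≠ 0)
    (hab : α ≠ β) (hbc : β ≠ γ) (hca : γ ≠ α)
    (hs : α * β + β * γ + γ * α ≠ 0)
    (G : Pt) (hG : G = (3:ℝ)⁻¹ • (A + B + C))
    (P : Pt) (hP : P = α • A + β • B + γ • C)
    (P' : Pt)
    (hP'' : P' = (α * β + β * γ + γ * α)⁻¹ • ((β * γ) • A + (γ * α) • B + (α * β) • C))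
    (Q : Pt) (hQ : Q = G - (2:ℝ)⁻¹ • (P' - G))
    (Q' : Pt) (hQ' : Q' = G - (2:ℝ)⁻¹ • (P - G))
    (D E F : Pt)
    (hD : D = (β + γ)⁻¹ • (β • B + γ • C))
    (hE : E = (γ + α)⁻¹ • (α • A + γ • C))
    (hF : F = (α + β)⁻¹ • (α • A + β • B))
    (D₃ E₃ F₃ : Pt)
    (hD₃ : D₃ = (β + γ)⁻¹ • (γ • B + β • C))
    (hE₃ : E₃ = (γ + α)⁻¹ • (γ • A + α • C))
    (hF₃ : F₃ = (α + β)⁻¹ • (β • A + α • B))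
    (TP : Pt →ᵃ[ℝ] Pt) (hTPA : TP A = D) (hTPB : TP B = E) (hTPC : TP C = F)
    (TP' : Pt →ᵃ[ℝ] Pt) (hTP'A : TP' A = D₃) (hTP'B : TP' B = E₃) (hTP'C : TP' C = F₃)
    (V : Pt) (hV : V = (2:ℝ) • Q - P)
    :
    Collinear ℝ ({midpoint ℝ P Q, TP G, TP V} : Set Pt) ∧
    Collinear ℝ ({midpoint ℝ P' Q', TP' G, TP' V} : Set Pt) := by
  obtain rfl : γ = 1 - α - β := by linarith
  have hA1 : (1:ℝ) - α ≠ 0 := fun h0 => hβγ (by linarith)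
  have hB1 : (1:ℝ) - β ≠ 0 := fun h0 => hγα (by linarith)
  have hmid : ∀ x y : Pt, midpoint ℝ x y = (2:ℝ)⁻¹ • (x + y) := by
    intro x y
    rw [midpoint_eq_smul_add, invOf_eq_inv]
  have hD' : D = (1 - α)⁻¹ • (β • B + (1 - α - β) • C) := by
    rw [hD, show β + (1 - α - β) = 1 - α from by ring]
  have hE' : E = (1 - β)⁻¹ • (α • A + (1 - α - β) • C) := by
    rw [hE, show (1 - α - β) + α = 1 - β from by ring]
  have hD₃' : D₃ = (1 - α)⁻¹ • ((1 - α - β) • B + β • C) := by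
    rw [hD₃, show β + (1 - α - β) = 1 - α from by ring]
  have hE₃' : E₃ = (1 - β)⁻¹ • ((1 - α - β) • A + α • C) := by
    rw [hE₃, show (1 - α - β) + α = 1 - β from by ring]
  set sP : ℝ := α * β + β * (1 - α - β) + (1 - α - β) * α with hsdef
  have hs0 : β * (α + (1 - α - β)) + α * (1 - α - β) ≠ 0 := by
    have h := hs; rw [hsdef] at h; intro h0; exact h (by linear_combination h0)
  have hSum : (1 - α - sP⁻¹ * (β * (1 - α - β))) + (1 - β - sP⁻¹ * ((1 - α - β) * α))
      + (1 - (1 - α - β) - sP⁻¹ * (α * β)) = 1 := by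
    rw [hsdef]; field_simp; ring
  have hGcomb : G = (3:ℝ)⁻¹ • A + (3:ℝ)⁻¹ • B + (3:ℝ)⁻¹ • C := by
    rw [hG]; module
  have hVcomb : V = (1 - α - sP⁻¹ * (β * (1 - α - β))) • A
      + (1 - β - sP⁻¹ * ((1 - α - β) * α)) • B
      + (1 - (1 - α - β) - sP⁻¹ * (α * β)) • C := by
    rw [hV, hQ, hG, hP, hP'', hsdef]
    match_scalars <;> · field_simp; ring
  have hTPG : TP G = (3:ℝ)⁻¹ • D + (3:ℝ)⁻¹ • E + (3:ℝ)⁻¹ • F := by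
    rw [hGcomb, aff_comb TP _ _ _ (by norm_num), hTPA, hTPB, hTPC]
  have hTPV : TP V = (1 - α - sP⁻¹ * (β * (1 - α - β))) • D
      + (1 - β - sP⁻¹ * ((1 - α - β) * α)) • E
      + (1 - (1 - α - β) - sP⁻¹ * (α * β)) • F := by
    rw [hVcomb, aff_comb TP _ _ _ hSum, hTPA, hTPB, hTPC]
  have hTP'G : TP' G = (3:ℝ)⁻¹ • D₃ + (3:ℝ)⁻¹ • E₃ + (3:ℝ)⁻¹ • F₃ := by
    rw [hGcomb, aff_comb TP' _ _ _ (by norm_num), hTP'A, hTP'B, hTP'C]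
  have hTP'V : TP' V = (1 - α - sP⁻¹ * (β * (1 - α - β))) • D₃
      + (1 - β - sP⁻¹ * ((1 - α - β) * α)) • E₃
      + (1 - (1 - α - β) - sP⁻¹ * (α * β)) • F₃ := by
    rw [hVcomb, aff_comb TP' _ _ _ hSum, hTP'A, hTP'B, hTP'C]
  constructor
  · rw [collinear_iff_of_mem (Set.mem_insert _ _)]
    refine ⟨TP G - midpoint ℝ P Q, fun p hp => ?_⟩
    simp only [Set.mem_insert_iff, Set.mem_singleton_iff] at hp
    rcases hp with rfl | rfl | rfl
    · exact ⟨0, by simp⟩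
    · exact ⟨1, by simp only [vadd_eq_add, one_smul]; abel⟩
    · refine ⟨-3, ?_⟩
      simp only [vadd_eq_add]
      rw [hTPV, hTPG, hmid, hP, hQ, hG, hP'', hD', hE', hF, hsdef]
      match_scalars <;> · field_simp; ring
  · rw [collinear_iff_of_mem (Set.mem_insert _ _)]
    refine ⟨TP' G - midpoint ℝ P' Q', fun p hp => ?_⟩
    simp only [Set.mem_insert_iff, Set.mem_singleton_iff] at hp
    rcases hp with rfl | rfl | rfl
    · exact ⟨0, by simp⟩
    · exact ⟨1, by simp only [vadd_eq_add, one_smul]; abel⟩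
    · refine ⟨-3, ?_⟩
      simp only [vadd_eq_add]
      rw [hTP'V, hTP'G, hmid, hP'', hQ', hG, hP, hD₃', hE₃', hF₃, hsdef]
      match_scalars <;> · field_simp; ring
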